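/- Let m ≥ 1 and p ≥ 1, let c : {1,…,m} → {1,…,p} be a coloring, and let F ⊆ [-1,1]^m be a set of vectors each of which respects c, with the zero vector 0 ∈ F. For ε > 0 let N(ε) denote the minimal cardinality of an internal ε-cover of F in the ℓ₂ norm on ℝ^m (a subset C ⊆ F such that every f ∈ F is within ℓ₂-distance ε of some element of C). Then for every α > 0, the empirical Rademacher complexity satisfies R(F) ≤ 4α√p/m + (12/m)·∫_α^{√m} √(log N(ε)) dε. -/

import Mathlib

open Finset

/-- Empirical Rademacher complexity of a set `F` of vectors in `ℝ^m`:
the average over all `2^m` sign vectors (encoded as `Fin m → Bool`, with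
`true ↦ 1` and `false ↦ -1`) of `sup_{f ∈ F} (1/m) ∑ i σ i * f i`. -/
noncomputable def radComplexity (m : ℕ) (F : Set (Fin m → ℝ)) : ℝ :=
  (∑ σ : Fin m → Bool,
      ⨆ f : F, (1 / (m : ℝ)) * ∑ i, (if σ i then (1 : ℝ) else -1) * (f : Fin m → ℝ) i) /
    2 ^ m

/-- The internal `ε`-covering number of `F ⊆ ℝ^m` with respect to the ℓ₂ norm:
the minimal cardinality of a finite subset `C ⊆ F` such that every `f ∈ F` is
within ℓ₂-distance `ε` of some element of `C`. -/
noncomputable def coveringNumber (m : ℕ) (F : Set (Fin m → ℝ)) (ε : ℝ) : ℕ :=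
  sInf {n : ℕ | ∃ C : Finset (Fin m → ℝ), ↑C ⊆ F ∧ C.card = n ∧
    ∀ f ∈ F, ∃ g ∈ C, Real.sqrt (∑ i, (f i - g i) ^ 2) ≤ ε}


namespace DudleyAux

noncomputable def sg (b : Bool) : ℝ := if b then 1 else -1

noncomputable def ip {m : ℕ} (σ : Fin m → Bool) (x : Fin m → ℝ) : ℝ := ∑ i, sg (σ i) * x i

noncomputable def nrm {m : ℕ} (x : Fin m → ℝ) : ℝ := Real.sqrt (∑ i, x i ^ 2)

noncomputable def gf (m : ℕ) (F : Set (Fin m → ℝ)) (ε : ℝ) : ℝ :=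
  Real.sqrt (Real.log (coveringNumber m F ε))

lemma sg_mul_self (b : Bool) : sg b * sg b = 1 := by cases b <;> simp [sg]

lemma abs_sg (b : Bool) : |sg b| = 1 := by cases b <;> simp [sg]

lemma sum_prod_bool {m : ℕ} (u : Fin m → Bool → ℝ) :
    ∑ σ : Fin m → Bool, ∏ i, u i (σ i) = ∏ i, (u i true + u i false) := by
  rw [← Fintype.piFinset_univ, Finset.sum_prod_piFinset]
  congr 1; ext i
  simp

lemma sum_sg {m : ℕ} (i : Fin m) : ∑ σ : Fin m → Bool, sg (σ i) = 0 := by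
  have h : ∀ σ : Fin m → Bool, sg (σ i) = ∏ l, (if l = i then sg (σ l) else 1) := by
    intro σ; rw [Finset.prod_ite_eq' univ i (fun l => sg (σ l))]; simp
  calc ∑ σ : Fin m → Bool, sg (σ i)
      = ∑ σ : Fin m → Bool, ∏ l, (fun l b => if l = i then sg b else 1) l (σ l) := by
        simp only []; exact Finset.sum_congr rfl fun σ _ => h σ
    _ = ∏ l, ((if l = i then sg true else 1) + (if l = i then sg false else 1)) :=
        sum_prod_bool (fun l b => if l = i then sg b else 1)
    _ = 0 := by
        apply Finset.prod_eq_zero (Finset.mem_univ i)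
        simp [sg]

lemma sum_sg_mul {m : ℕ} (i j : Fin m) (hij : i ≠ j) :
    ∑ σ : Fin m → Bool, sg (σ i) * sg (σ j) = 0 := by
  have h : ∀ σ : Fin m → Bool, sg (σ i) * sg (σ j) =
      ∏ l, ((if l = i then sg (σ l) else 1) * (if l = j then sg (σ l) else 1)) := by
    intro σ
    rw [Finset.prod_mul_distrib, Finset.prod_ite_eq' univ i (fun l => sg (σ l)),
      Finset.prod_ite_eq' univ j (fun l => sg (σ l))]
    simp
  calc ∑ σ : Fin m → Bool, sg (σ i) * sg (σ j)
      = ∑ σ : Fin m → Bool, ∏ l,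
        (fun l b => (if l = i then sg b else 1) * (if l = j then sg b else 1)) l (σ l) := by
        exact Finset.sum_congr rfl fun σ _ => h σ
    _ = ∏ l, (((if l = i then sg true else 1) * (if l = j then sg true else 1)) +
        ((if l = i then sg false else 1) * (if l = j then sg false else 1))) :=
        sum_prod_bool (fun l b => (if l = i then sg b else 1) * (if l = j then sg b else 1))
    _ = 0 := by
        apply Finset.prod_eq_zero (Finset.mem_univ i)
        simp [sg, if_neg hij, hij]

lemma sum_sq_subset {m : ℕ} (A : Finset (Fin m)) :
    ∑ σ : Fin m → Bool, (∑ i ∈ A, sg (σ i)) ^ 2 = (A.card : ℝ) * 2 ^ m := by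
  have : ∀ σ : Fin m → Bool, (∑ i ∈ A, sg (σ i)) ^ 2 =
      ∑ i ∈ A, ∑ j ∈ A, sg (σ i) * sg (σ j) := by
    intro σ; rw [sq, Finset.sum_mul_sum]
  simp_rw [this]
  rw [Finset.sum_comm]
  have : ∀ i ∈ A, ∑ σ : Fin m → Bool, ∑ j ∈ A, sg (σ i) * sg (σ j) = 2 ^ m := by
    intro i hi
    rw [Finset.sum_comm]
    have : ∀ j ∈ A, ∑ σ : Fin m → Bool, sg (σ i) * sg (σ j) =
        if j = i then (2 : ℝ) ^ m else 0 := by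
      intro j hj
      by_cases hji : j = i
      · subst hji
        simp_rw [sg_mul_self]
        simp [Finset.card_univ]
      · rw [sum_sg_mul i j (fun h => hji h.symm), if_neg hji]
    rw [Finset.sum_congr rfl this, Finset.sum_ite_eq' A i (fun _ => (2:ℝ)^m), if_pos hi]
  rw [Finset.sum_congr rfl this, Finset.sum_const, nsmul_eq_mul]

lemma mgf {m : ℕ} (x : Fin m → ℝ) (l : ℝ) :
    ∑ σ : Fin m → Bool, Real.exp (l * ip σ x) ≤ 2 ^ m * Real.exp (l ^ 2 * (∑ i, x i ^ 2) / 2) := by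
  have h1 : ∀ σ : Fin m → Bool, Real.exp (l * ip σ x) =
      ∏ i, Real.exp (l * (sg (σ i) * x i)) := by
    intro σ
    rw [← Real.exp_sum, ip, Finset.mul_sum]
  calc ∑ σ : Fin m → Bool, Real.exp (l * ip σ x)
      = ∑ σ : Fin m → Bool, ∏ i, (fun i b => Real.exp (l * (sg b * x i))) i (σ i) := by
        exact Finset.sum_congr rfl fun σ _ => h1 σ
    _ = ∏ i, (Real.exp (l * (sg true * x i)) + Real.exp (l * (sg false * x i))) :=
        sum_prod_bool (fun i b => Real.exp (l * (sg b * x i)))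
    _ = ∏ i, 2 * Real.cosh (l * x i) := by
        apply Finset.prod_congr rfl; intro i _
        rw [Real.cosh_eq]
        simp [sg]
        ring_nf
    _ ≤ ∏ i, 2 * Real.exp ((l * x i) ^ 2 / 2) := by
        apply Finset.prod_le_prod
        · intro i _; positivity
        · intro i _
          have := Real.cosh_le_exp_half_sq (l * x i)
          nlinarith
    _ = 2 ^ m * Real.exp (l ^ 2 * (∑ i, x i ^ 2) / 2) := by
        rw [Finset.prod_mul_distrib, Finset.prod_const, ← Real.exp_sum]
        simp [Finset.card_univ]
        congr 1
        rw [← Finset.sum_div, Finset.mul_sum]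
        congr 1
        apply Finset.sum_congr rfl; intro i _; ring


lemma nrm_nonneg {m : ℕ} (x : Fin m → ℝ) : 0 ≤ nrm x := Real.sqrt_nonneg _

lemma sum_sq_eq_nrm_sq {m : ℕ} (x : Fin m → ℝ) : ∑ i, x i ^ 2 = nrm x ^ 2 :=
  (Real.sq_sqrt (Finset.sum_nonneg fun i _ => sq_nonneg _)).symm

lemma sum_sq_le_of_nrm_le {m : ℕ} {x : Fin m → ℝ} {r : ℝ} (h : nrm x ≤ r) :
    ∑ i, x i ^ 2 ≤ r ^ 2 := by
  rw [sum_sq_eq_nrm_sq]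
  exact pow_le_pow_left₀ (nrm_nonneg x) h 2

lemma sum_ip_zero {m : ℕ} (x : Fin m → ℝ) : ∑ σ : Fin m → Bool, ip σ x = 0 := by
  simp only [ip]
  rw [Finset.sum_comm]
  apply Finset.sum_eq_zero
  intro i _
  rw [← Finset.sum_mul, sum_sg, zero_mul]

/-- Massart's finite class lemma, summed form. -/
lemma massart {m : ℕ} (C : Finset (Fin m → ℝ)) (hC : C.Nonempty) (r : ℝ) (hr : 0 ≤ r)
    (hb : ∀ x ∈ C, nrm x ≤ r) :
    ∑ σ : Fin m → Bool, C.sup' hC (fun x => ip σ x) ≤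
      2 ^ m * (r * Real.sqrt (2 * Real.log C.card)) := by
  by_cases hcard : C.card = 1
  · obtain ⟨x, hx⟩ := Finset.card_eq_one.mp hcard
    subst hx
    simp only [Finset.sup'_singleton, Finset.card_singleton, Nat.cast_one, Real.log_one,
      mul_zero, Real.sqrt_zero]
    rw [sum_ip_zero x]
  · have hn2 : 2 ≤ C.card := by
      have := Finset.card_pos.mpr hC
      omega
    have hL : 0 < Real.log C.card := by
      apply Real.log_pos
      exact_mod_cast Nat.lt_of_lt_of_le one_lt_two hn2
    by_cases hr0 : r = 0
    · subst hr0
      have hx0 : ∀ x ∈ C, ∀ σ : Fin m → Bool, ip σ x = 0 := by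
        intro x hx σ
        have h0 : ∑ i, x i ^ 2 ≤ 0 := by simpa using sum_sq_le_of_nrm_le (hb x hx)
        have : ∀ i, x i = 0 := by
          intro i
          have h1 : ∑ i, x i ^ 2 = 0 :=
            le_antisymm h0 (Finset.sum_nonneg fun i _ => sq_nonneg _)
          have := (Finset.sum_eq_zero_iff_of_nonneg (fun i _ => sq_nonneg (x i))).mp h1 i
            (Finset.mem_univ i)
          exact sq_eq_zero_iff.mp this
        simp [ip, this]
      have : ∀ σ : Fin m → Bool, C.sup' hC (fun x => ip σ x) = 0 := by
        intro σ
        obtain ⟨x, hx, hsup⟩ := Finset.exists_mem_eq_sup' hC (fun x => ip σ x)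
        rw [hsup, hx0 x hx σ]
      simp [this]
    · have hrpos : 0 < r := lt_of_le_of_ne hr (Ne.symm hr0)
      set L : ℝ := Real.log C.card with hLdef
      set lam : ℝ := Real.sqrt (2 * L) / r with hlam
      have hs : 0 < Real.sqrt (2 * L) := Real.sqrt_pos.mpr (by linarith)
      have hlampos : 0 < lam := div_pos hs hrpos
      set Y : (Fin m → Bool) → ℝ := fun σ => ∑ x ∈ C, Real.exp (lam * ip σ x) with hY
      have hYpos : ∀ σ, 0 < Y σ := by
        intro σ
        exact Finset.sum_pos (fun x _ => Real.exp_pos _) hC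
      -- pointwise: sup' ≤ (1/lam) * log (Y σ)
      have hpt : ∀ σ : Fin m → Bool, C.sup' hC (fun x => ip σ x) ≤ Real.log (Y σ) / lam := by
        intro σ
        obtain ⟨x, hx, hsup⟩ := Finset.exists_mem_eq_sup' hC (fun x => ip σ x)
        rw [hsup, le_div_iff₀ hlampos]
        have h1 : Real.exp (lam * ip σ x) ≤ Y σ :=
          Finset.single_le_sum (f := fun y => Real.exp (lam * ip σ y))
            (fun y _ => le_of_lt (Real.exp_pos _)) hx
        have h2 : lam * ip σ x ≤ Real.log (Y σ) := by
          have := Real.log_le_log (Real.exp_pos _) h1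
          rwa [Real.log_exp] at this
        rw [mul_comm]
        exact h2
      -- Jensen: ∑ log Y ≤ 2^m log (mean Y)
      have hjensen : ∑ σ : Fin m → Bool, Real.log (Y σ) ≤
          (2 ^ m : ℝ) * Real.log (∑ σ : Fin m → Bool, ((2:ℝ) ^ m)⁻¹ * Y σ) := by
        have hcardσ : (Finset.univ : Finset (Fin m → Bool)).card = 2 ^ m := by
          simp [Finset.card_univ]
        have hw : ∀ σ ∈ (Finset.univ : Finset (Fin m → Bool)), (0:ℝ) ≤ ((2:ℝ)^m)⁻¹ :=
          fun _ _ => by positivity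
        have hw1 : ∑ _σ : Fin m → Bool, ((2:ℝ)^m)⁻¹ = 1 := by
          rw [Finset.sum_const, hcardσ, nsmul_eq_mul]
          push_cast
          field_simp
        have hz : ∀ σ ∈ (Finset.univ : Finset (Fin m → Bool)), (0:ℝ) ≤ Y σ :=
          fun σ _ => le_of_lt (hYpos σ)
        have hgm := Real.geom_mean_le_arith_mean_weighted Finset.univ
          (fun _ => ((2:ℝ)^m)⁻¹) Y hw hw1 hz
        have hprodpos : 0 < ∏ σ : Fin m → Bool, Y σ ^ (((2:ℝ)^m)⁻¹) :=
          Finset.prod_pos fun σ _ => Real.rpow_pos_of_pos (hYpos σ) _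
        have hlog := Real.log_le_log hprodpos hgm
        rw [Real.log_prod (fun σ _ => ne_of_gt (Real.rpow_pos_of_pos (hYpos σ) _))] at hlog
        have : ∀ σ : Fin m → Bool, Real.log (Y σ ^ (((2:ℝ)^m)⁻¹)) =
            ((2:ℝ)^m)⁻¹ * Real.log (Y σ) := fun σ => Real.log_rpow (hYpos σ) _
        rw [Finset.sum_congr rfl (fun σ _ => this σ), ← Finset.mul_sum] at hlog
        calc ∑ σ : Fin m → Bool, Real.log (Y σ)
            = (2^m : ℝ) * (((2:ℝ)^m)⁻¹ * ∑ σ : Fin m → Bool, Real.log (Y σ)) := by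
              field_simp
          _ ≤ (2^m : ℝ) * Real.log (∑ σ : Fin m → Bool, ((2:ℝ)^m)⁻¹ * Y σ) := by
              apply mul_le_mul_of_nonneg_left hlog (by positivity)
      -- bound the mean of Y
      have hmean : ∑ σ : Fin m → Bool, ((2:ℝ)^m)⁻¹ * Y σ ≤
          (C.card : ℝ) * Real.exp (lam ^ 2 * r ^ 2 / 2) := by
        rw [← Finset.mul_sum, hY]
        rw [Finset.sum_comm]
        have : ∀ x ∈ C, ∑ σ : Fin m → Bool, Real.exp (lam * ip σ x) ≤
            (2:ℝ)^m * Real.exp (lam ^ 2 * r ^ 2 / 2) := by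
          intro x hx
          refine le_trans (mgf x lam) ?_
          apply mul_le_mul_of_nonneg_left _ (by positivity)
          apply Real.exp_le_exp.mpr
          have h1 : ∑ i, x i ^ 2 ≤ r ^ 2 := sum_sq_le_of_nrm_le (hb x hx)
          have h2 : (0:ℝ) ≤ lam ^ 2 := sq_nonneg _
          nlinarith
        calc ((2:ℝ)^m)⁻¹ * ∑ x ∈ C, ∑ σ : Fin m → Bool, Real.exp (lam * ip σ x)
            ≤ ((2:ℝ)^m)⁻¹ * ∑ x ∈ C, (2:ℝ)^m * Real.exp (lam ^ 2 * r ^ 2 / 2) := by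
              apply mul_le_mul_of_nonneg_left (Finset.sum_le_sum this) (by positivity)
          _ = (C.card : ℝ) * Real.exp (lam ^ 2 * r ^ 2 / 2) := by
              rw [Finset.sum_const, nsmul_eq_mul]
              field_simp
      -- combine
      have hmeanpos : 0 < ∑ σ : Fin m → Bool, ((2:ℝ)^m)⁻¹ * Y σ :=
        Finset.sum_pos (fun σ _ => mul_pos (by positivity) (hYpos σ)) Finset.univ_nonempty
      have hlogmean : Real.log (∑ σ : Fin m → Bool, ((2:ℝ)^m)⁻¹ * Y σ) ≤
          L + lam ^ 2 * r ^ 2 / 2 := by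
        calc Real.log (∑ σ : Fin m → Bool, ((2:ℝ)^m)⁻¹ * Y σ)
            ≤ Real.log ((C.card : ℝ) * Real.exp (lam ^ 2 * r ^ 2 / 2)) :=
              Real.log_le_log hmeanpos hmean
          _ = L + lam ^ 2 * r ^ 2 / 2 := by
              have hcpos : (0:ℝ) < (C.card : ℝ) := by exact_mod_cast Finset.card_pos.mpr hC
              rw [Real.log_mul (ne_of_gt hcpos) (ne_of_gt (Real.exp_pos _)), Real.log_exp, hLdef]
      have hfinal : ∑ σ : Fin m → Bool, C.sup' hC (fun x => ip σ x) ≤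
          (2^m : ℝ) * ((L + lam ^ 2 * r ^ 2 / 2) / lam) := by
        calc ∑ σ : Fin m → Bool, C.sup' hC (fun x => ip σ x)
            ≤ ∑ σ : Fin m → Bool, Real.log (Y σ) / lam := Finset.sum_le_sum fun σ _ => hpt σ
          _ = (∑ σ : Fin m → Bool, Real.log (Y σ)) / lam := by rw [Finset.sum_div]
          _ ≤ ((2^m : ℝ) * Real.log (∑ σ : Fin m → Bool, ((2:ℝ)^m)⁻¹ * Y σ)) / lam := by
              gcongr
          _ ≤ (2^m : ℝ) * ((L + lam ^ 2 * r ^ 2 / 2) / lam) := by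
              rw [mul_div_assoc]
              gcongr
      refine le_trans hfinal ?_
      apply mul_le_mul_of_nonneg_left _ (by positivity)
      -- (L + lam^2 r^2/2)/lam = r √(2L)
      have hs2 : Real.sqrt (2 * L) ^ 2 = 2 * L := Real.sq_sqrt (by linarith)
      have hss : Real.sqrt (2 * L) * Real.sqrt (2 * L) = 2 * L :=
        Real.mul_self_sqrt (by linarith)
      rw [div_le_iff₀ hlampos]
      have h1 : r * Real.sqrt (2 * L) * lam = 2 * L := by
        rw [hlam]
        calc r * Real.sqrt (2 * L) * (Real.sqrt (2 * L) / r)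
            = (Real.sqrt (2 * L) * Real.sqrt (2 * L)) * (r * r⁻¹) := by ring
          _ = 2 * L := by rw [hss, mul_inv_cancel₀ (ne_of_gt hrpos), mul_one]
      have h2 : lam ^ 2 * r ^ 2 = 2 * L := by
        rw [hlam, div_pow, hs2]
        field_simp
      linarith

/-- the color class of `k`. -/
def cls {m p : ℕ} (c : Fin m → Fin p) (k : Fin p) : Finset (Fin m) :=
  univ.filter (fun i => c i = k)

/-- The weighted sign aggregate. -/
noncomputable def W {m p : ℕ} (c : Fin m → Fin p) (σ : Fin m → Bool) : ℝ :=
  Real.sqrt (∑ k : Fin p, (∑ i ∈ cls c k, sg (σ i)) ^ 2 / ((cls c k).card : ℝ))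

lemma W_nonneg {m p : ℕ} (c : Fin m → Fin p) (σ : Fin m → Bool) : 0 ≤ W c σ :=
  Real.sqrt_nonneg _

lemma sum_cls {m p : ℕ} (c : Fin m → Fin p) (g : Fin m → ℝ) :
    ∑ k : Fin p, ∑ i ∈ cls c k, g i = ∑ i, g i := by
  simpa [cls] using Finset.sum_fiberwise univ c g

/-- Key coloring Cauchy-Schwarz bound. -/
lemma ip_le_W {m p : ℕ} (c : Fin m → Fin p) (f : Fin m → ℝ)
    (hf : ∀ i j : Fin m, c i = c j → f i = f j) (σ : Fin m → Bool) :
    ip σ f ≤ nrm f * W c σ := by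
  classical
  set a : Fin p → ℝ := fun k => Real.sqrt (∑ i ∈ cls c k, f i ^ 2) with ha
  set b : Fin p → ℝ := fun k => |∑ i ∈ cls c k, sg (σ i)| / Real.sqrt ((cls c k).card) with hb
  have hterm : ∀ k : Fin p, ∑ i ∈ cls c k, sg (σ i) * f i ≤ a k * b k := by
    intro k
    rcases Finset.eq_empty_or_nonempty (cls c k) with he | ⟨i0, hi0⟩
    · simp [he, ha, hb]
    · have hconst : ∀ i ∈ cls c k, f i = f i0 := by
        intro i hi
        apply hf
        have h1 : c i = k := by simpa [cls] using hi
        have h2 : c i0 = k := by simpa [cls] using hi0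
        rw [h1, h2]
      have hS : ∑ i ∈ cls c k, sg (σ i) * f i = (∑ i ∈ cls c k, sg (σ i)) * f i0 := by
        rw [Finset.sum_mul]
        exact Finset.sum_congr rfl fun i hi => by rw [hconst i hi]
      have hsq : ∑ i ∈ cls c k, f i ^ 2 = ((cls c k).card : ℝ) * f i0 ^ 2 := by
        rw [Finset.sum_congr rfl fun i hi => by rw [hconst i hi]]
        rw [Finset.sum_const, nsmul_eq_mul]
      have hcardpos : (0:ℝ) < ((cls c k).card : ℝ) := by
        exact_mod_cast Finset.card_pos.mpr ⟨i0, hi0⟩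
      have hak : a k = Real.sqrt ((cls c k).card) * |f i0| := by
        rw [ha]
        simp only []
        rw [hsq, Real.sqrt_mul (le_of_lt hcardpos), Real.sqrt_sq_eq_abs]
      have hab : a k * b k = |f i0| * |∑ i ∈ cls c k, sg (σ i)| := by
        rw [hak, hb]
        have hsc : Real.sqrt ((cls c k).card) ≠ 0 := by
          positivity
        field_simp
      rw [hS, hab]
      calc (∑ i ∈ cls c k, sg (σ i)) * f i0 ≤ |(∑ i ∈ cls c k, sg (σ i)) * f i0| :=
            le_abs_self _
        _ = |f i0| * |∑ i ∈ cls c k, sg (σ i)| := by rw [abs_mul]; ring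
  have hCS : ∑ k : Fin p, a k * b k ≤
      Real.sqrt (∑ k, a k ^ 2) * Real.sqrt (∑ k, b k ^ 2) := by
    have h := Finset.sum_mul_sq_le_sq_mul_sq univ a b
    have hnn : 0 ≤ ∑ k : Fin p, a k * b k := by
      apply Finset.sum_nonneg
      intro k _
      apply mul_nonneg (Real.sqrt_nonneg _)
      apply div_nonneg (abs_nonneg _) (Real.sqrt_nonneg _)
    calc ∑ k : Fin p, a k * b k
        = Real.sqrt ((∑ k : Fin p, a k * b k) ^ 2) := (Real.sqrt_sq hnn).symm
      _ ≤ Real.sqrt ((∑ k, a k ^ 2) * ∑ k, b k ^ 2) := Real.sqrt_le_sqrt h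
      _ = Real.sqrt (∑ k, a k ^ 2) * Real.sqrt (∑ k, b k ^ 2) := by
          rw [Real.sqrt_mul (Finset.sum_nonneg fun k _ => sq_nonneg _)]
  have hasum : ∑ k : Fin p, a k ^ 2 = ∑ i, f i ^ 2 := by
    have : ∀ k : Fin p, a k ^ 2 = ∑ i ∈ cls c k, f i ^ 2 := by
      intro k
      rw [ha]
      exact Real.sq_sqrt (Finset.sum_nonneg fun i _ => sq_nonneg _)
    rw [Finset.sum_congr rfl fun k _ => this k, sum_cls]
  have hbsum : ∑ k : Fin p, b k ^ 2 =
      ∑ k : Fin p, (∑ i ∈ cls c k, sg (σ i)) ^ 2 / ((cls c k).card : ℝ) := by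
    apply Finset.sum_congr rfl
    intro k _
    rw [hb]
    simp only []
    rw [div_pow, sq_abs, Real.sq_sqrt (Nat.cast_nonneg _)]
  calc ip σ f = ∑ k : Fin p, ∑ i ∈ cls c k, sg (σ i) * f i := (sum_cls c _).symm
    _ ≤ ∑ k : Fin p, a k * b k := Finset.sum_le_sum fun k _ => hterm k
    _ ≤ Real.sqrt (∑ k, a k ^ 2) * Real.sqrt (∑ k, b k ^ 2) := hCS
    _ = nrm f * W c σ := by rw [hasum, hbsum, nrm, W]

lemma sum_W_le {m p : ℕ} (c : Fin m → Fin p) :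
    ∑ σ : Fin m → Bool, W c σ ≤ (2:ℝ) ^ m * Real.sqrt p := by
  classical
  have hW2 : ∑ σ : Fin m → Bool, (W c σ) ^ 2 ≤ (p : ℝ) * 2 ^ m := by
    have hWsq : ∀ σ : Fin m → Bool, (W c σ) ^ 2 =
        ∑ k : Fin p, (∑ i ∈ cls c k, sg (σ i)) ^ 2 / ((cls c k).card : ℝ) := by
      intro σ
      rw [W]
      apply Real.sq_sqrt
      apply Finset.sum_nonneg
      intro k _
      apply div_nonneg (sq_nonneg _) (Nat.cast_nonneg _)
    rw [Finset.sum_congr rfl fun σ _ => hWsq σ, Finset.sum_comm]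
    have hk : ∀ k : Fin p,
        (∑ σ : Fin m → Bool, (∑ i ∈ cls c k, sg (σ i)) ^ 2 / ((cls c k).card : ℝ)) ≤ 2 ^ m := by
      intro k
      rw [← Finset.sum_div, sum_sq_subset]
      rcases Nat.eq_zero_or_pos (cls c k).card with h0 | hpos
      · rw [h0]
        simp
      · have : ((cls c k).card : ℝ) ≠ 0 := by positivity
        rw [mul_div_assoc, mul_comm, div_mul_cancel₀ _ this]
    calc ∑ k : Fin p, ∑ σ : Fin m → Bool, (∑ i ∈ cls c k, sg (σ i)) ^ 2 / ((cls c k).card : ℝ)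
        ≤ ∑ _k : Fin p, (2:ℝ) ^ m := Finset.sum_le_sum fun k _ => hk k
      _ = (p : ℝ) * 2 ^ m := by rw [Finset.sum_const, nsmul_eq_mul]; simp
  have hCS := Finset.sum_mul_sq_le_sq_mul_sq univ (fun _ : Fin m → Bool => (1:ℝ)) (W c)
  simp only [one_pow, one_mul, Finset.sum_const, nsmul_eq_mul, Finset.card_univ] at hCS
  have hcard : (Fintype.card (Fin m → Bool) : ℝ) = 2 ^ m := by
    simp [Fintype.card_fun]
  rw [hcard, mul_one] at hCS
  have hnn : 0 ≤ ∑ σ : Fin m → Bool, W c σ :=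
    Finset.sum_nonneg fun σ _ => W_nonneg c σ
  have h2 : (∑ σ : Fin m → Bool, W c σ) ^ 2 ≤ ((2:ℝ) ^ m * Real.sqrt p) ^ 2 := by
    calc (∑ σ : Fin m → Bool, W c σ) ^ 2 ≤ 2 ^ m * ∑ σ : Fin m → Bool, (W c σ) ^ 2 := hCS
      _ ≤ 2 ^ m * ((p : ℝ) * 2 ^ m) := by
          apply mul_le_mul_of_nonneg_left hW2 (by positivity)
      _ = ((2:ℝ) ^ m * Real.sqrt p) ^ 2 := by
          rw [mul_pow, Real.sq_sqrt (Nat.cast_nonneg p)]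
          ring
  calc ∑ σ : Fin m → Bool, W c σ
      = Real.sqrt ((∑ σ : Fin m → Bool, W c σ) ^ 2) := (Real.sqrt_sq hnn).symm
    _ ≤ Real.sqrt (((2:ℝ) ^ m * Real.sqrt p) ^ 2) := Real.sqrt_le_sqrt h2
    _ = (2:ℝ) ^ m * Real.sqrt p := Real.sqrt_sq (by positivity)

variable {m : ℕ} {F : Set (Fin m → ℝ)}

def coverSet (m : ℕ) (F : Set (Fin m → ℝ)) (ε : ℝ) : Set ℕ :=
  {n : ℕ | ∃ C : Finset (Fin m → ℝ), ↑C ⊆ F ∧ C.card = n ∧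
    ∀ f ∈ F, ∃ g ∈ C, Real.sqrt (∑ i, (f i - g i) ^ 2) ≤ ε}

lemma coveringNumber_eq (ε : ℝ) : coveringNumber m F ε = sInf (coverSet m F ε) := rfl

lemma coverSet_nonempty (hm : 1 ≤ m) (hbdd : ∀ f ∈ F, ∀ i, f i ∈ Set.Icc (-1 : ℝ) 1)
    {ε : ℝ} (hε : 0 < ε) : (coverSet m F ε).Nonempty := by
  classical
  have hmpos : (0:ℝ) < Real.sqrt m := Real.sqrt_pos.mpr (by exact_mod_cast hm)
  set δ : ℝ := ε / Real.sqrt m with hδ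
  have hδpos : 0 < δ := div_pos hε hmpos
  have htb : TotallyBounded F := by
    have hsub : F ⊆ Set.Icc (fun _ => (-1:ℝ)) (fun _ => 1) := by
      intro f hf
      constructor
      · intro i; exact (hbdd f hf i).1
      · intro i; exact (hbdd f hf i).2
    exact (isCompact_Icc.totallyBounded).subset hsub
  obtain ⟨t, hts, htfin, hcov⟩ := totallyBounded_iff_subset.mp htb
    {q : (Fin m → ℝ) × (Fin m → ℝ) | dist q.1 q.2 < δ} (Metric.dist_mem_uniformity hδpos)
  refine ⟨htfin.toFinset.card, htfin.toFinset, ?_, rfl, ?_⟩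
  · intro x hx
    apply hts
    simpa using hx
  · intro f hf
    obtain ⟨g, hg, hfg⟩ := Set.mem_iUnion₂.mp (hcov hf)
    refine ⟨g, by simpa using hg, ?_⟩
    have hd : ∀ i, (f i - g i) ^ 2 ≤ δ ^ 2 := by
      intro i
      have h1 : dist (f i) (g i) ≤ dist f g := dist_le_pi_dist f g i
      have h2 : |f i - g i| ≤ δ := by
        rw [← Real.dist_eq]
        exact le_trans h1 (le_of_lt hfg)
      calc (f i - g i) ^ 2 = |f i - g i| ^ 2 := (sq_abs _).symm
        _ ≤ δ ^ 2 := by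
            apply pow_le_pow_left₀ (abs_nonneg _) h2
    calc Real.sqrt (∑ i, (f i - g i) ^ 2) ≤ Real.sqrt (∑ _i : Fin m, δ ^ 2) :=
          Real.sqrt_le_sqrt (Finset.sum_le_sum fun i _ => hd i)
      _ = Real.sqrt m * δ := by
          rw [Finset.sum_const, nsmul_eq_mul, Finset.card_univ, Fintype.card_fin,
            Real.sqrt_mul (Nat.cast_nonneg m), Real.sqrt_sq (le_of_lt hδpos)]
      _ = ε := by
          rw [hδ, mul_div_cancel₀ _ (ne_of_gt hmpos)]

lemma exists_min_cover (hm : 1 ≤ m) (hbdd : ∀ f ∈ F, ∀ i, f i ∈ Set.Icc (-1 : ℝ) 1)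
    {ε : ℝ} (hε : 0 < ε) :
    ∃ C : Finset (Fin m → ℝ), ↑C ⊆ F ∧ C.card = coveringNumber m F ε ∧
      ∀ f ∈ F, ∃ g ∈ C, Real.sqrt (∑ i, (f i - g i) ^ 2) ≤ ε := by
  have h := Nat.sInf_mem (coverSet_nonempty hm hbdd hε)
  obtain ⟨C, h1, h2, h3⟩ := h
  exact ⟨C, h1, h2, h3⟩

lemma coveringNumber_pos (hm : 1 ≤ m) (hbdd : ∀ f ∈ F, ∀ i, f i ∈ Set.Icc (-1 : ℝ) 1)
    (hzero : (fun _ : Fin m => (0 : ℝ)) ∈ F) {ε : ℝ} (hε : 0 < ε) :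
    1 ≤ coveringNumber m F ε := by
  obtain ⟨C, _, h2, h3⟩ := exists_min_cover hm hbdd hε
  by_contra h
  push_neg at h
  interval_cases h' : coveringNumber m F ε
  · obtain ⟨g, hg, _⟩ := h3 _ hzero
    rw [Finset.card_eq_zero.mp h2] at hg
    simp at hg

lemma coveringNumber_antitone (hm : 1 ≤ m) (hbdd : ∀ f ∈ F, ∀ i, f i ∈ Set.Icc (-1 : ℝ) 1)
    {ε ε' : ℝ} (hε : 0 < ε) (h : ε ≤ ε') :
    coveringNumber m F ε' ≤ coveringNumber m F ε := by
  obtain ⟨C, h1, h2, h3⟩ := exists_min_cover hm hbdd hε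
  rw [← h2]
  apply Nat.sInf_le
  exact ⟨C, h1, rfl, fun f hf => by
    obtain ⟨g, hg, hd⟩ := h3 f hf
    exact ⟨g, hg, le_trans hd h⟩⟩

lemma coveringNumber_eq_one (hbdd : ∀ f ∈ F, ∀ i, f i ∈ Set.Icc (-1 : ℝ) 1)
    (hzero : (fun _ : Fin m => (0 : ℝ)) ∈ F) {ε : ℝ} (h : Real.sqrt m ≤ ε) :
    coveringNumber m F ε = 1 := by
  classical
  have hone : 1 ∈ coverSet m F ε := by
    refine ⟨{fun _ => 0}, ?_, Finset.card_singleton _, ?_⟩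
    · intro x hx
      simp at hx
      rw [hx]
      exact hzero
    · intro f hf
      refine ⟨fun _ => 0, Finset.mem_singleton_self _, ?_⟩
      calc Real.sqrt (∑ i, (f i - 0) ^ 2) ≤ Real.sqrt (∑ _i : Fin m, 1) := by
            apply Real.sqrt_le_sqrt
            apply Finset.sum_le_sum
            intro i _
            have := hbdd f hf i
            rw [sub_zero]
            nlinarith [this.1, this.2]
        _ ≤ ε := by
            rw [Finset.sum_const, nsmul_eq_mul, Finset.card_univ, Fintype.card_fin, mul_one]
            exact le_trans (le_of_eq rfl) h
  have hle : coveringNumber m F ε ≤ 1 := Nat.sInf_le hone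
  have hge : 1 ≤ coveringNumber m F ε := by
    by_contra hc
    push_neg at hc
    have h0 : coveringNumber m F ε = 0 := by omega
    have hmem := Nat.sInf_mem (Set.nonempty_of_mem hone)
    rw [coveringNumber_eq] at h0
    rw [h0] at hmem
    obtain ⟨C, _, h2, h3⟩ := hmem
    obtain ⟨g, hg, _⟩ := h3 _ hzero
    rw [Finset.card_eq_zero.mp h2] at hg
    simp at hg
  omega


section Integrals
variable {m : ℕ} {F : Set (Fin m → ℝ)}
variable (hm : 1 ≤ m) (hbdd : ∀ f ∈ F, ∀ i, f i ∈ Set.Icc (-1 : ℝ) 1)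
    (hzero : (fun _ : Fin m => (0 : ℝ)) ∈ F)

lemma gf_nonneg (ε : ℝ) : 0 ≤ gf m F ε := Real.sqrt_nonneg _

include hm hbdd hzero in
lemma gf_antitoneOn : AntitoneOn (gf m F) (Set.Ioi (0:ℝ)) := by
  intro x hx y hy hxy
  have h1 : coveringNumber m F y ≤ coveringNumber m F x :=
    coveringNumber_antitone hm hbdd hx hxy
  apply Real.sqrt_le_sqrt
  apply Real.log_le_log
  · have := coveringNumber_pos hm hbdd hzero hy
    exact_mod_cast Nat.lt_of_lt_of_le Nat.zero_lt_one this
  · exact_mod_cast h1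

include hm hbdd hzero in
lemma gf_integrable {a b : ℝ} (ha : 0 < a) (hab : a ≤ b) :
    IntervalIntegrable (gf m F) MeasureTheory.volume a b := by
  apply AntitoneOn.intervalIntegrable
  apply (gf_antitoneOn hm hbdd hzero).mono
  rw [Set.uIcc_of_le hab]
  intro x hx
  exact lt_of_lt_of_le ha hx.1

include hm hbdd hzero in
lemma gf_integral_lower {a b : ℝ} (ha : 0 < a) (hab : a ≤ b) :
    (b - a) * gf m F b ≤ ∫ ε in a..b, gf m F ε := by
  have h1 : ∫ _ε in a..b, gf m F b = (b - a) * gf m F b := by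
    rw [intervalIntegral.integral_const, smul_eq_mul]
  rw [← h1]
  apply intervalIntegral.integral_mono_on hab
  · exact intervalIntegrable_const
  · exact gf_integrable hm hbdd hzero ha hab
  · intro x hx
    exact gf_antitoneOn hm hbdd hzero (Set.mem_Ioi.mpr (lt_of_lt_of_le ha hx.1))
      (Set.mem_Ioi.mpr (lt_of_lt_of_le ha (le_trans hx.1 hx.2))) hx.2

omit hm hbdd hzero in
lemma gf_integral_nonneg {a b : ℝ} (hab : a ≤ b) :
    0 ≤ ∫ ε in a..b, gf m F ε :=
  intervalIntegral.integral_nonneg hab (fun u _ => gf_nonneg u)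

include hm hbdd hzero in
lemma gf_integral_mono {a b a' b' : ℝ} (ha' : 0 < a') (h1 : a' ≤ a) (h2 : a ≤ b) (h3 : b ≤ b') :
    ∫ ε in a..b, gf m F ε ≤ ∫ ε in a'..b', gf m F ε := by
  have ha : 0 < a := lt_of_lt_of_le ha' h1
  have hib : IntervalIntegrable (gf m F) MeasureTheory.volume a' a :=
    gf_integrable hm hbdd hzero ha' h1
  have hib2 : IntervalIntegrable (gf m F) MeasureTheory.volume a b :=
    gf_integrable hm hbdd hzero ha h2
  have hib3 : IntervalIntegrable (gf m F) MeasureTheory.volume b b' :=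
    gf_integrable hm hbdd hzero (lt_of_lt_of_le ha h2) h3
  have e1 : ∫ ε in a'..b', gf m F ε =
      (∫ ε in a'..a, gf m F ε) + (∫ ε in a..b, gf m F ε) + (∫ ε in b..b', gf m F ε) := by
    rw [intervalIntegral.integral_add_adjacent_intervals hib hib2,
      intervalIntegral.integral_add_adjacent_intervals (hib.trans hib2) hib3]
  rw [e1]
  have n1 : 0 ≤ ∫ ε in a'..a, gf m F ε := gf_integral_nonneg h1
  have n3 : 0 ≤ ∫ ε in b..b', gf m F ε := gf_integral_nonneg h3
  linarith

end Integrals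

lemma ip_sub {m : ℕ} (σ : Fin m → Bool) (x y : Fin m → ℝ) :
    ip σ (x - y) = ip σ x - ip σ y := by
  simp [ip, Pi.sub_apply, mul_sub, Finset.sum_sub_distrib]

lemma nrm_sub_eq {m : ℕ} (f g : Fin m → ℝ) :
    nrm (f - g) = Real.sqrt (∑ i, (f i - g i) ^ 2) := rfl

lemma nrm_eq_norm {m : ℕ} (x : Fin m → ℝ) :
    nrm x = ‖(WithLp.equiv 2 (Fin m → ℝ)).symm x‖ := by
  rw [EuclideanSpace.norm_eq, nrm]
  congr 1
  apply Finset.sum_congr rfl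
  intro i _
  rw [Real.norm_eq_abs, sq_abs]; rfl

lemma nrm_triangle {m : ℕ} (x y z : Fin m → ℝ) :
    nrm (x - z) ≤ nrm (x - y) + nrm (y - z) := by
  rw [nrm_eq_norm, nrm_eq_norm, nrm_eq_norm]
  have h : (WithLp.equiv 2 (Fin m → ℝ)).symm (x - z) =
      (WithLp.equiv 2 (Fin m → ℝ)).symm (x - y) + (WithLp.equiv 2 (Fin m → ℝ)).symm (y - z) := by
    rw [show x - z = (x - y) + (y - z) by abel, WithLp.equiv_symm_apply, WithLp.toLp_add]
  rw [h]
  exact norm_add_le _ _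

lemma nrm_sub_symm {m : ℕ} (x y : Fin m → ℝ) : nrm (x - y) = nrm (y - x) := by
  rw [nrm, nrm]
  congr 1
  apply Finset.sum_congr rfl
  intro i _
  simp [Pi.sub_apply]
  ring

end DudleyAux

open DudleyAux in
theorem rademacher_dudley_with_colors (m p : ℕ) (hm : 1 ≤ m) (hp : 1 ≤ p)
    (c : Fin m → Fin p) (F : Set (Fin m → ℝ))
    (hresp : ∀ f ∈ F, ∀ i j : Fin m, c i = c j → f i = f j)
    (hbdd : ∀ f ∈ F, ∀ i, f i ∈ Set.Icc (-1 : ℝ) 1)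
    (hzero : (fun _ : Fin m => (0 : ℝ)) ∈ F)
    (α : ℝ) (hα : 0 < α) :
    radComplexity m F ≤
      4 * α * Real.sqrt p / m +
        (12 / m) *
          ∫ ε in α..Real.sqrt m, Real.sqrt (Real.log (coveringNumber m F ε)) := by
  classical
  haveI : Nonempty F := ⟨⟨_, hzero⟩⟩
  have hm0 : (0:ℝ) < m := by exact_mod_cast hm
  have hsqm : 0 < Real.sqrt m := Real.sqrt_pos.mpr hm0
  have hIeq : (∫ ε in α..Real.sqrt m, Real.sqrt (Real.log (coveringNumber m F ε)))
      = ∫ ε in α..Real.sqrt m, gf m F ε := by simp only [gf]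
  rw [hIeq]
  set Ig : ℝ := ∫ ε in α..Real.sqrt m, gf m F ε with hIg
  -- nonnegativity of the integral
  have hInn : 0 ≤ Ig := by
    rcases le_or_gt α (Real.sqrt m) with hle | hlt
    · exact gf_integral_nonneg hle
    · have hz : (∫ ε in Real.sqrt m..α, gf m F ε) = 0 := by
        have hEq : Set.EqOn (gf m F) 0 (Set.uIcc (Real.sqrt m) α) := by
          intro x hx
          rw [Set.uIcc_of_le hlt.le] at hx
          have h1 : coveringNumber m F x = 1 := coveringNumber_eq_one hbdd hzero hx.1
          simp [gf, h1]
        rw [intervalIntegral.integral_congr hEq]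
        simp
      rw [hIg, intervalIntegral.integral_symm, hz, neg_zero]
  have hnrmF : ∀ f ∈ F, nrm f ≤ Real.sqrt m := by
    intro f hf
    rw [nrm]
    have h1 : ∑ i, f i ^ 2 ≤ (m : ℝ) := by
      calc ∑ i, f i ^ 2 ≤ ∑ _i : Fin m, (1:ℝ) := by
            apply Finset.sum_le_sum
            intro i _
            have := hbdd f hf i
            nlinarith [this.1, this.2]
        _ = (m : ℝ) := by simp
    exact Real.sqrt_le_sqrt h1
  -- the key bound
  have key : ∃ T : (Fin m → Bool) → ℝ, (∀ σ : Fin m → Bool, ∀ f ∈ F, ip σ f ≤ T σ) ∧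
      (∑ σ : Fin m → Bool, T σ) ≤ 2^m * (4*α*Real.sqrt p + 12 * Ig) := by
    rcases le_or_gt (Real.sqrt m) (2*α) with hcase | hcase
    · -- small sample case: no chaining needed
      refine ⟨fun σ => 2*α*W c σ, ?_, ?_⟩
      · intro σ f hf
        calc ip σ f ≤ nrm f * W c σ := ip_le_W c f (hresp f hf) σ
          _ ≤ Real.sqrt m * W c σ :=
              mul_le_mul_of_nonneg_right (hnrmF f hf) (W_nonneg c σ)
          _ ≤ 2*α*W c σ := mul_le_mul_of_nonneg_right hcase (W_nonneg c σ)
      · rw [← Finset.mul_sum]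
        have h1 : 2*α*(∑ σ : Fin m → Bool, W c σ) ≤ 2*α*((2:ℝ)^m*Real.sqrt p) :=
          mul_le_mul_of_nonneg_left (sum_W_le c) (by positivity)
        have h2 : (0:ℝ) ≤ 2^m * (2*α*Real.sqrt p + 12*Ig) := by
          apply mul_nonneg (by positivity)
          have : (0:ℝ) ≤ 2*α*Real.sqrt p := by positivity
          linarith
        have h3 : (2:ℝ)^m * (4*α*Real.sqrt p + 12*Ig) =
            2*α*((2:ℝ)^m * Real.sqrt p) + 2^m*(2*α*Real.sqrt p + 12*Ig) := by ring
        linarith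
    · -- chaining case
      have h2α : 0 < 2*α := by linarith
      obtain ⟨n, hn⟩ := pow_unbounded_of_one_lt (Real.sqrt m / (2*α)) (one_lt_two (α := ℝ))
      have hPex : ∃ n : ℕ, Real.sqrt m < 2*α*2^n :=
        ⟨n, by rw [div_lt_iff₀ h2α] at hn; linarith [hn]⟩
      have hn₀1 : 1 ≤ Nat.find hPex := by
        by_contra h
        push_neg at h
        have h0 : Nat.find hPex = 0 := by omega
        have := Nat.find_spec hPex
        rw [h0] at this
        simp at this
        linarith
      set J : ℕ := Nat.find hPex - 1 with hJdef
      have hJ1 : J + 1 = Nat.find hPex := by omega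
      have hspec : Real.sqrt m < 2*α*2^(J+1) := by rw [hJ1]; exact Nat.find_spec hPex
      have hnot : 2*α*2^J ≤ Real.sqrt m := by
        have := Nat.find_min hPex (show J < Nat.find hPex by omega)
        push_neg at this
        exact this
      set εj : ℕ → ℝ := fun j => Real.sqrt m / 2^j with hεj
      have hεpos : ∀ j, 0 < εj j := fun j => div_pos hsqm (by positivity)
      have hεsucc : ∀ j, εj j = 2 * εj (j+1) := by
        intro j
        simp only [hεj]
        rw [pow_succ]
        field_simp
      have hεmono : ∀ {a b : ℕ}, b ≤ a → εj a ≤ εj b := by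
        intro a b h
        simp only [hεj]
        gcongr
        norm_num
      have hε2α : 2*α ≤ εj J := by
        simp only [hεj]
        rw [le_div_iff₀ (by positivity)]
        linarith
      have hεlt : εj J < 4*α := by
        simp only [hεj]
        rw [div_lt_iff₀ (by positivity)]
        have : (2:ℝ)^(J+1) = 2*2^J := by rw [pow_succ]; ring
        nlinarith [hspec]
      have hαle : α ≤ εj (J+1) := by
        have h1 := hε2α
        rw [hεsucc J] at h1
        linarith
      have hε1le : εj 1 ≤ Real.sqrt m := by
        simp only [hεj]
        rw [div_le_iff₀ (by positivity)]
        nlinarith [hsqm]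
      -- minimal covers at each scale
      have hex : ∀ j : ℕ, ∃ C : Finset (Fin m → ℝ), ↑C ⊆ F ∧
          C.card = coveringNumber m F (εj j) ∧
          ∀ f ∈ F, ∃ g ∈ C, Real.sqrt (∑ i, (f i - g i) ^ 2) ≤ εj j :=
        fun j => exists_min_cover hm hbdd (hεpos j)
      choose Cov hCsub hCcard hCcov using hex
      have hCcov' : ∀ j, ∀ f ∈ F, ∃ g ∈ Cov j, nrm (f - g) ≤ εj j := by
        intro j f hf
        obtain ⟨g, hg1, hg2⟩ := hCcov j f hf
        exact ⟨g, hg1, by rwa [nrm_sub_eq]⟩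
      have hchain : ∀ f, f ∈ F → ∃ gc : ℕ → (Fin m → ℝ),
          (∀ j, gc j ∈ Cov j) ∧ (∀ j, nrm (f - gc j) ≤ εj j) := by
        intro f hf
        choose gc h1 h2 using fun j => hCcov' j f hf
        exact ⟨gc, h1, h2⟩
      choose gchain hgmem hgdist using hchain
      -- level zero cover is a singleton
      have hN0 : coveringNumber m F (εj 0) = 1 := by
        apply coveringNumber_eq_one hbdd hzero
        simp only [hεj]
        rw [pow_zero, div_one]
      have hC0card : (Cov 0).card = 1 := by rw [hCcard 0, hN0]
      obtain ⟨x0, hx0⟩ := Finset.card_eq_one.mp hC0card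
      have hgc0 : ∀ f (hf : f ∈ F), gchain f hf 0 = x0 := by
        intro f hf
        have := hgmem f hf 0
        rw [hx0] at this
        simpa using this
      -- link sets
      set Lk : ℕ → Finset (Fin m → ℝ) := fun j =>
        ((Cov (j+1) ×ˢ Cov j).filter
          (fun q => nrm (q.1 - q.2) ≤ 3 * εj (j+1))).image (fun q => q.1 - q.2) with hLk
      have hlink : ∀ (f) (hf : f ∈ F) (j : ℕ),
          gchain f hf (j+1) - gchain f hf j ∈ Lk j := by
        intro f hf j
        rw [hLk]
        apply Finset.mem_image.mpr
        refine ⟨(gchain f hf (j+1), gchain f hf j), ?_, rfl⟩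
        rw [Finset.mem_filter]
        refine ⟨Finset.mem_product.mpr ⟨hgmem f hf (j+1), hgmem f hf j⟩, ?_⟩
        calc nrm (gchain f hf (j+1) - gchain f hf j)
            ≤ nrm (gchain f hf (j+1) - f) + nrm (f - gchain f hf j) := nrm_triangle _ _ _
          _ ≤ εj (j+1) + εj j := by
              apply add_le_add _ (hgdist f hf j)
              rw [nrm_sub_symm]
              exact hgdist f hf (j+1)
          _ = 3 * εj (j+1) := by rw [hεsucc j]; ring
      have hLne : ∀ j, (Lk j).Nonempty := fun j => ⟨_, hlink _ hzero j⟩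
      have hLbound : ∀ j, ∀ x ∈ Lk j, nrm x ≤ 3 * εj (j+1) := by
        intro j x hx
        rw [hLk] at hx
        obtain ⟨q, hq, rfl⟩ := Finset.mem_image.mp hx
        exact (Finset.mem_filter.mp hq).2
      set M : ℕ → (Fin m → Bool) → ℝ := fun j σ => (Lk j).sup' (hLne j) (fun x => ip σ x)
        with hM
      -- pointwise chaining bound
      refine ⟨fun σ => 4*α*W c σ + (∑ j ∈ range J, M j σ) + ip σ x0, ?_, ?_⟩
      · intro σ f hf
        show ip σ f ≤ 4*α*W c σ + (∑ j ∈ range J, M j σ) + ip σ x0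
        have htel : ∑ j ∈ range J, (ip σ (gchain f hf (j+1)) - ip σ (gchain f hf j)) =
            ip σ (gchain f hf J) - ip σ (gchain f hf 0) :=
          Finset.sum_range_sub (fun j => ip σ (gchain f hf j)) J
        have hdecomp : ip σ f = (ip σ f - ip σ (gchain f hf J)) +
            (∑ j ∈ range J, (ip σ (gchain f hf (j+1)) - ip σ (gchain f hf j))) +
            ip σ (gchain f hf 0) := by
          rw [htel]; ring
        rw [hdecomp, hgc0 f hf]
        have h1 : ip σ f - ip σ (gchain f hf J) ≤ 4*α*W c σ := by
          rw [← ip_sub]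
          have hr : ∀ i j' : Fin m, c i = c j' →
              (f - gchain f hf J) i = (f - gchain f hf J) j' := by
            intro i j' hc
            simp only [Pi.sub_apply]
            rw [hresp f hf i j' hc, hresp _ (hCsub J (hgmem f hf J)) i j' hc]
          calc ip σ (f - gchain f hf J) ≤ nrm (f - gchain f hf J) * W c σ :=
                ip_le_W c _ hr σ
            _ ≤ (4*α) * W c σ := by
                apply mul_le_mul_of_nonneg_right _ (W_nonneg c σ)
                exact le_trans (hgdist f hf J) (le_of_lt hεlt)
        have h2 : ∑ j ∈ range J, (ip σ (gchain f hf (j+1)) - ip σ (gchain f hf j)) ≤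
            ∑ j ∈ range J, M j σ := by
          apply Finset.sum_le_sum
          intro j _
          rw [← ip_sub, hM]
          exact Finset.le_sup' (fun x => ip σ x) (hlink f hf j)
        linarith
      · -- expectation bound
        have hMsum : ∀ j, ∑ σ : Fin m → Bool, M j σ ≤
            2^m * (12 * ∫ ε in εj (j+2)..εj (j+1), gf m F ε) := by
          intro j
          have hNpos : 1 ≤ coveringNumber m F (εj (j+1)) :=
            coveringNumber_pos hm hbdd hzero (hεpos (j+1))
          have hcard : (Lk j).card ≤ (coveringNumber m F (εj (j+1)))^2 := by
            calc (Lk j).card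
                ≤ ((Cov (j+1) ×ˢ Cov j).filter
                  (fun q => nrm (q.1 - q.2) ≤ 3 * εj (j+1))).card := by
                  rw [hLk]; exact Finset.card_image_le
              _ ≤ (Cov (j+1) ×ˢ Cov j).card := Finset.card_filter_le _ _
              _ = (Cov (j+1)).card * (Cov j).card := Finset.card_product _ _
              _ ≤ (coveringNumber m F (εj (j+1)))^2 := by
                  rw [hCcard, hCcard, sq]
                  apply Nat.mul_le_mul_left
                  apply coveringNumber_antitone hm hbdd (hεpos (j+1))
                  rw [hεsucc j]
                  linarith [hεpos (j+1)]
          have hL1 : 1 ≤ (Lk j).card := Finset.card_pos.mpr (hLne j)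
          have hgnn : 0 ≤ Real.log (coveringNumber m F (εj (j+1))) := by
            apply Real.log_nonneg
            exact_mod_cast hNpos
          have hlog : Real.log ((Lk j).card) ≤
              2 * Real.log (coveringNumber m F (εj (j+1))) := by
            calc Real.log ((Lk j).card)
                ≤ Real.log (((coveringNumber m F (εj (j+1)) : ℝ))^2) := by
                  apply Real.log_le_log (by exact_mod_cast hL1)
                  exact_mod_cast hcard
              _ = 2 * Real.log (coveringNumber m F (εj (j+1))) := by
                  rw [Real.log_pow]; push_cast; ring
          have hsq : Real.sqrt (2 * Real.log ((Lk j).card)) ≤ 2 * gf m F (εj (j+1)) := by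
            rw [gf]
            calc Real.sqrt (2 * Real.log ((Lk j).card))
                ≤ Real.sqrt ((2:ℝ)^2 * Real.log (coveringNumber m F (εj (j+1)))) := by
                  apply Real.sqrt_le_sqrt
                  nlinarith [hlog]
              _ = 2 * Real.sqrt (Real.log (coveringNumber m F (εj (j+1)))) := by
                  rw [Real.sqrt_mul (by positivity), Real.sqrt_sq (by norm_num : (0:ℝ) ≤ 2)]
          calc ∑ σ : Fin m → Bool, M j σ
              ≤ 2^m * ((3 * εj (j+1)) * Real.sqrt (2 * Real.log ((Lk j).card))) := by
                rw [hM]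
                exact massart (Lk j) (hLne j) (3 * εj (j+1)) (by positivity) (hLbound j)
            _ ≤ 2^m * ((3 * εj (j+1)) * (2 * gf m F (εj (j+1)))) := by
                apply mul_le_mul_of_nonneg_left _ (by positivity)
                apply mul_le_mul_of_nonneg_left hsq (by positivity)
            _ = 2^m * (12 * ((εj (j+1) - εj (j+2)) * gf m F (εj (j+1)))) := by
                have h := hεsucc (j+1)
                have he : εj (j+1) - εj (j+2) = εj (j+2) := by rw [h]; ring
                rw [he, h]
                ring
            _ ≤ 2^m * (12 * ∫ ε in εj (j+2)..εj (j+1), gf m F ε) := by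
                apply mul_le_mul_of_nonneg_left _ (by positivity)
                apply mul_le_mul_of_nonneg_left _ (by norm_num)
                apply gf_integral_lower hm hbdd hzero (hεpos (j+2))
                rw [hεsucc (j+1)]
                linarith [hεpos (j+2)]
        have hsumint : ∑ j ∈ range J, ∫ ε in εj (j+2)..εj (j+1), gf m F ε =
            ∫ ε in εj (J+1)..εj 1, gf m F ε := by
          have hadj := intervalIntegral.sum_integral_adjacent_intervals
            (μ := MeasureTheory.volume) (a := fun k => εj (J+1-k)) (n := J)
            (fun k hk => gf_integrable hm hbdd hzero (hεpos _) (hεmono (by omega)))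
          have hrefl := Finset.sum_range_reflect
            (fun j => ∫ ε in εj (j+2)..εj (j+1), gf m F ε) J
          rw [← hrefl]
          have hterm : ∀ k ∈ range J,
              (∫ ε in εj (J-1-k+2)..εj (J-1-k+1), gf m F ε) =
              ∫ ε in εj (J+1-k)..εj (J+1-(k+1)), gf m F ε := by
            intro k hk
            have hk' : k < J := Finset.mem_range.mp hk
            have e1 : J-1-k+2 = J+1-k := by omega
            have e2 : J-1-k+1 = J+1-(k+1) := by omega
            rw [e1, e2]
          rw [Finset.sum_congr rfl hterm, hadj]
          simp only [Nat.sub_zero, Nat.add_sub_cancel_left]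
        calc ∑ σ : Fin m → Bool, (4*α*W c σ + (∑ j ∈ range J, M j σ) + ip σ x0)
            = 4*α*(∑ σ : Fin m → Bool, W c σ) +
              (∑ j ∈ range J, ∑ σ : Fin m → Bool, M j σ) +
              ∑ σ : Fin m → Bool, ip σ x0 := by
              rw [Finset.sum_add_distrib, Finset.sum_add_distrib, ← Finset.mul_sum,
                Finset.sum_comm]
          _ = 4*α*(∑ σ : Fin m → Bool, W c σ) +
              (∑ j ∈ range J, ∑ σ : Fin m → Bool, M j σ) := by
              rw [sum_ip_zero x0, add_zero]
          _ ≤ 4*α*((2:ℝ)^m * Real.sqrt p) +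
              2^m * (12 * ∫ ε in εj (J+1)..εj 1, gf m F ε) := by
              apply add_le_add
              · exact mul_le_mul_of_nonneg_left (sum_W_le c) (by positivity)
              · calc ∑ j ∈ range J, ∑ σ : Fin m → Bool, M j σ
                    ≤ ∑ j ∈ range J, 2^m * (12 * ∫ ε in εj (j+2)..εj (j+1), gf m F ε) :=
                      Finset.sum_le_sum fun j _ => hMsum j
                  _ = 2^m * (12 * ∑ j ∈ range J, ∫ ε in εj (j+2)..εj (j+1), gf m F ε) := by
                      rw [← Finset.mul_sum, ← Finset.mul_sum]
                  _ = 2^m * (12 * ∫ ε in εj (J+1)..εj 1, gf m F ε) := by rw [hsumint]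
          _ ≤ 2^m * (4*α*Real.sqrt p + 12 * Ig) := by
              have hint : (∫ ε in εj (J+1)..εj 1, gf m F ε) ≤ Ig := by
                rw [hIg]
                exact gf_integral_mono hm hbdd hzero hα hαle (hεmono (by omega)) hε1le
              nlinarith [hint, pow_pos (show (0:ℝ) < 2 by norm_num) m]
  obtain ⟨T, hT1, hT2⟩ := key
  rw [radComplexity, div_le_iff₀ (by positivity : (0:ℝ) < 2^m)]
  have hμ : ∀ σ : Fin m → Bool,
      (⨆ f : F, (1 / (m : ℝ)) * ∑ i, (if σ i then (1 : ℝ) else -1) * (f : Fin m → ℝ) i)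
      ≤ (1/(m:ℝ)) * T σ := by
    intro σ
    apply ciSup_le
    intro f
    have he : (∑ i, (if σ i then (1:ℝ) else -1) * (f : Fin m → ℝ) i) = ip σ (f : Fin m → ℝ) := by
      rw [ip]
      apply Finset.sum_congr rfl
      intro i _
      rw [sg]
    rw [he]
    exact mul_le_mul_of_nonneg_left (hT1 σ f f.2) (by positivity)
  calc ∑ σ : Fin m → Bool,
        ⨆ f : F, (1 / (m : ℝ)) * ∑ i, (if σ i then (1 : ℝ) else -1) * (f : Fin m → ℝ) i
      ≤ ∑ σ : Fin m → Bool, (1/(m:ℝ)) * T σ := Finset.sum_le_sum fun σ _ => hμ σ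
    _ = (1/(m:ℝ)) * ∑ σ : Fin m → Bool, T σ := by rw [Finset.mul_sum]
    _ ≤ (1/(m:ℝ)) * (2^m * (4*α*Real.sqrt p + 12 * Ig)) :=
        mul_le_mul_of_nonneg_left hT2 (by positivity)
    _ = (4 * α * Real.sqrt p / m + (12 / m) * Ig) * 2 ^ m := by
        field_simp
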